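/- The greedy first-price allocation is revenue-maximizing: given bids b_1 > b_2 > ... > b_n > 0, budgets B_i > 0, and slot clicks D_1 > ... > D_n ≥ 0, the allocation that sequentially gives each bidder i (in decreasing bid order) the maximum clicks c_i subject to c_i ≤ B_i/b_i and feasibility with previously fixed c_1,...,c_{i−1} maximizes Σ_i b_i c_i over all vectors c ≥ 0 satisfying c_i ≤ B_i/b_i for all i and Σ_{i∈S} c_i ≤ D_1 + ... + D_{|S|} for all subsets S ⊆ {1,...,n}. -/
import Mathlib


open Finset

/-- Feasibility of a click allocation: nonnegative, respecting the budget caps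
`cᵢ ≤ Bᵢ/bᵢ`, and every subset of bidders gets at most the sum of the
corresponding number of largest slot capacities. -/
def FeasClicks {n : ℕ} (b B : Fin n → ℝ) (D : ℕ → ℝ) (c : Fin n → ℝ) : Prop :=
  (∀ i, 0 ≤ c i) ∧ (∀ i, c i ≤ B i / b i) ∧
  (∀ S : Finset (Fin n), ∑ i ∈ S, c i ≤ ∑ j ∈ Finset.range S.card, D j)

/-- Monotonicity: shrinking a feasible allocation pointwise keeps it feasible. -/
lemma feasClicks_mono {n : ℕ} {b B : Fin n → ℝ} {D : ℕ → ℝ} {c d : Fin n → ℝ}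
    (hc : FeasClicks b B D c) (hd0 : ∀ i, 0 ≤ d i) (hdc : ∀ i, d i ≤ c i) :
    FeasClicks b B D d :=
  ⟨hd0, fun i => (hdc i).trans (hc.2.1 i),
   fun S => le_trans (Finset.sum_le_sum fun i _ => hdc i) (hc.2.2 S)⟩

/-- Concavity of the capacity function `k ↦ ∑_{j<k} D j` for nonincreasing `D`. -/
lemma capacity_submodular {n : ℕ} {D : ℕ → ℝ}
    (hD : ∀ j k : ℕ, j ≤ k → k < n → D k ≤ D j)
    {p q r u : ℕ} (hpu : u + r = p + q) (hrq : r ≤ q) (hrp : r ≤ p) (hun : u ≤ n) :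
    (∑ j ∈ Finset.range u, D j) + ∑ j ∈ Finset.range r, D j ≤
      (∑ j ∈ Finset.range p, D j) + ∑ j ∈ Finset.range q, D j := by
  have hqu : q ≤ u := by omega
  have h1 : ∑ j ∈ Finset.range u, D j =
      (∑ j ∈ Finset.range q, D j) + ∑ j ∈ Finset.Ico q u, D j := by
    simp only [Finset.range_eq_Ico]
    exact (Finset.sum_Ico_consecutive _ (Nat.zero_le q) hqu).symm
  have h2 : ∑ j ∈ Finset.range p, D j =
      (∑ j ∈ Finset.range r, D j) + ∑ j ∈ Finset.Ico r p, D j := by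
    simp only [Finset.range_eq_Ico]
    exact (Finset.sum_Ico_consecutive _ (Nat.zero_le r) hrp).symm
  have h3 : ∑ j ∈ Finset.Ico q u, D j ≤ ∑ j ∈ Finset.Ico r p, D j := by
    rw [Finset.sum_Ico_eq_sum_range, Finset.sum_Ico_eq_sum_range]
    have hlen : u - q = p - r := by omega
    rw [hlen]
    apply Finset.sum_le_sum
    intro i hi
    rw [Finset.mem_range] at hi
    exact hD (r + i) (q + i) (by omega) (by omega)
  linarith

section Exchange

variable {n : ℕ} {b B : Fin n → ℝ} {D : ℕ → ℝ}

/-- Union of two tight sets is tight. -/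
lemma tight_union (hD : ∀ j k : ℕ, j ≤ k → k < n → D k ≤ D j)
    {x : Fin n → ℝ} (hx : FeasClicks b B D x) {S T : Finset (Fin n)}
    (hS : ∑ i ∈ S, x i = ∑ j ∈ Finset.range S.card, D j)
    (hT : ∑ i ∈ T, x i = ∑ j ∈ Finset.range T.card, D j) :
    ∑ i ∈ S ∪ T, x i = ∑ j ∈ Finset.range (S ∪ T).card, D j := by
  have h1 := hx.2.2 (S ∪ T)
  have h2 := hx.2.2 (S ∩ T)
  have hsum : (∑ i ∈ S ∪ T, x i) + ∑ i ∈ S ∩ T, x i =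
      (∑ i ∈ S, x i) + ∑ i ∈ T, x i := Finset.sum_union_inter
  have hcard : (S ∪ T).card + (S ∩ T).card = S.card + T.card :=
    Finset.card_union_add_card_inter S T
  have hsub := capacity_submodular hD (p := S.card) (q := T.card) (r := (S ∩ T).card)
    (u := (S ∪ T).card) hcard (Finset.card_le_card Finset.inter_subset_right)
    (Finset.card_le_card Finset.inter_subset_left)
    (le_trans (Finset.card_le_univ _) (by simp))
  linarith

/-- Union of a finite family of tight sets is tight. -/
lemma tight_sup (hD : ∀ j k : ℕ, j ≤ k → k < n → D k ≤ D j)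
    {x : Fin n → ℝ} (hx : FeasClicks b B D x) (𝒯 : Finset (Finset (Fin n)))
    (h : ∀ S ∈ 𝒯, ∑ i ∈ S, x i = ∑ j ∈ Finset.range S.card, D j) :
    ∑ i ∈ 𝒯.sup id, x i = ∑ j ∈ Finset.range (𝒯.sup id).card, D j := by
  induction 𝒯 using Finset.induction_on with
  | empty => simp
  | @insert S 𝒯' hS ih =>
    rw [Finset.sup_insert]
    have hS' := h S (Finset.mem_insert_self S 𝒯')
    have hT' := ih fun T hT => h T (Finset.mem_insert_of_mem hT)
    exact tight_union hD hx hS' hT'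

/-- Exchange lemma: if every coordinate where `y` exceeds `x` lies in some
tight set for `x`, then the total of `y` is at most the total of `x`. -/
lemma exchange_le (hD : ∀ j k : ℕ, j ≤ k → k < n → D k ≤ D j)
    {x y : Fin n → ℝ} (hx : FeasClicks b B D x) (hy : FeasClicks b B D y)
    (hblk : ∀ i, x i < y i →
      ∃ S : Finset (Fin n), i ∈ S ∧ ∑ j ∈ S, x j = ∑ j ∈ Finset.range S.card, D j) :
    ∑ i, y i ≤ ∑ i, x i := by
  classical
  set A : Finset (Fin n) := Finset.univ.filter (fun i => x i < y i) with hA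
  set g : Fin n → Finset (Fin n) := fun i =>
    if h : x i < y i then (hblk i h).choose else ∅ with hg
  set U : Finset (Fin n) := (A.image g).sup id with hU
  have hUtight : ∑ i ∈ U, x i = ∑ j ∈ Finset.range U.card, D j := by
    apply tight_sup hD hx
    intro S hS
    rcases Finset.mem_image.1 hS with ⟨i, hiA, hgi⟩
    have hxy : x i < y i := (Finset.mem_filter.1 hiA).2
    have := (hblk i hxy).choose_spec.2
    rw [← hgi, hg]
    simpa [dif_pos hxy] using this
  have hAU : A ⊆ U := by
    intro i hiA
    have hxy : x i < y i := (Finset.mem_filter.1 hiA).2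
    have hiS : i ∈ g i := by
      rw [hg]; simpa [dif_pos hxy] using (hblk i hxy).choose_spec.1
    exact Finset.le_sup (f := id) (Finset.mem_image_of_mem g hiA) hiS
  have h1 : ∑ i ∈ U, y i ≤ ∑ i ∈ U, x i := (hy.2.2 U).trans_eq hUtight.symm
  have h2 : ∑ i ∈ Uᶜ, y i ≤ ∑ i ∈ Uᶜ, x i := by
    apply Finset.sum_le_sum
    intro i hi
    by_contra hlt
    push_neg at hlt
    have : i ∈ A := Finset.mem_filter.2 ⟨Finset.mem_univ i, hlt⟩
    exact (Finset.mem_compl.1 hi) (hAU this)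
  calc ∑ i, y i = ∑ i ∈ U, y i + ∑ i ∈ Uᶜ, y i := (Finset.sum_add_sum_compl U y).symm
    _ ≤ ∑ i ∈ U, x i + ∑ i ∈ Uᶜ, x i := by linarith
    _ = ∑ i, x i := Finset.sum_add_sum_compl U x

/-- If a coordinate of a feasible allocation is strictly below its budget cap and
cannot be increased, it lies in some tight set. -/
lemma blocking_tight {x : Fin n → ℝ} (hx : FeasClicks b B D x) (i : Fin n)
    (hmax : ∀ z : Fin n → ℝ, FeasClicks b B D z → (∀ j, j ≠ i → z j = x j) → z i ≤ x i)
    (hxb : x i < B i / b i) :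
    ∃ S : Finset (Fin n), i ∈ S ∧ ∑ j ∈ S, x j = ∑ j ∈ Finset.range S.card, D j := by
  classical
  by_contra hcon
  push_neg at hcon
  have hslack : ∀ S : Finset (Fin n), i ∈ S →
      ∑ j ∈ S, x j < ∑ j ∈ Finset.range S.card, D j := fun S hiS =>
    lt_of_le_of_ne (hx.2.2 S) (hcon S hiS)
  set 𝒮 : Finset (Finset (Fin n)) := Finset.univ.filter (fun S => i ∈ S) with h𝒮
  have hne : 𝒮.Nonempty := ⟨{i}, by simp [h𝒮]⟩
  set ε₁ : ℝ := 𝒮.inf' hne (fun S => (∑ j ∈ Finset.range S.card, D j) - ∑ j ∈ S, x j)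
  have hε₁ : 0 < ε₁ := by
    rw [Finset.lt_inf'_iff]
    intro S hS
    have : i ∈ S := (Finset.mem_filter.1 hS).2
    linarith [hslack S this]
  set ε : ℝ := min ε₁ (B i / b i - x i) with hε
  have hεpos : 0 < ε := lt_min hε₁ (by linarith)
  set z : Fin n → ℝ := Function.update x i (x i + ε) with hz
  have hzfeas : FeasClicks b B D z := by
    refine ⟨?_, ?_, ?_⟩
    · intro j
      rcases eq_or_ne j i with rfl | hne'
      · rw [hz, Function.update_self]; linarith [hx.1 j]
      · rw [hz, Function.update_of_ne hne']; exact hx.1 j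
    · intro j
      rcases eq_or_ne j i with rfl | hne'
      · rw [hz, Function.update_self]
        have : ε ≤ B j / b j - x j := min_le_right _ _
        linarith
      · rw [hz, Function.update_of_ne hne']; exact hx.2.1 j
    · intro S
      by_cases hiS : i ∈ S
      · have hsum : ∑ j ∈ S, z j = ε + ∑ j ∈ S, x j := by
          rw [hz, Finset.sum_update_of_mem hiS]
          rw [← Finset.sum_erase_add S x hiS]
          simp [Finset.erase_eq]
          ring
        have hεle : ε ≤ (∑ j ∈ Finset.range S.card, D j) - ∑ j ∈ S, x j :=
          le_trans (min_le_left _ _)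
            (Finset.inf'_le _ (Finset.mem_filter.2 ⟨Finset.mem_univ S, hiS⟩))
        rw [hsum]; linarith
      · have hsum : ∑ j ∈ S, z j = ∑ j ∈ S, x j := by
          apply Finset.sum_congr rfl
          intro j hj
          rw [hz, Function.update_of_ne (by rintro rfl; exact hiS hj)]
        rw [hsum]; exact hx.2.2 S
  have hzi : z i ≤ x i := hmax z hzfeas (fun j hj => by
    rw [hz, Function.update_of_ne hj])
  rw [hz, Function.update_self] at hzi
  linarith

end Exchange

/-- Abel-summation inequality: if all prefix sums of `Δ` (up to `n`) are
nonpositive and the weights `b` are nonincreasing and nonnegative on `[0,n)`,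
then the weighted sum is nonpositive. -/
lemma abel_nonpos {n : ℕ} {b Δ : ℕ → ℝ}
    (hbmono : ∀ k, k + 1 < n → b (k + 1) ≤ b k) (hb0 : ∀ k, k < n → 0 ≤ b k)
    (hpre : ∀ k, k ≤ n → ∑ j ∈ Finset.range k, Δ j ≤ 0) :
    ∑ j ∈ Finset.range n, b j * Δ j ≤ 0 := by
  have key : ∀ m, m ≤ n →
      ∑ j ∈ Finset.range m, b j * Δ j ≤ b (m - 1) * ∑ j ∈ Finset.range m, Δ j := by
    intro m
    induction m with
    | zero => simp
    | succ m ih =>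
      intro hm
      have hm' : m ≤ n := by omega
      have h1 := ih hm'
      rw [Finset.sum_range_succ, Finset.sum_range_succ]
      have hQ : ∑ j ∈ Finset.range m, Δ j ≤ 0 := hpre m hm'
      have hbb : b m ≤ b (m - 1) := by
        rcases Nat.eq_zero_or_pos m with rfl | hmpos
        · simp
        · have h := hbmono (m - 1) (by omega)
          have hmm : m - 1 + 1 = m := by omega
          rwa [hmm] at h
      have h2 : b (m - 1) * ∑ j ∈ Finset.range m, Δ j ≤
          b m * ∑ j ∈ Finset.range m, Δ j := mul_le_mul_of_nonpos_right hbb hQ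
      have hms : (m + 1) - 1 = m := by omega
      rw [hms]
      calc (∑ j ∈ Finset.range m, b j * Δ j) + b m * Δ m
          ≤ b (m - 1) * (∑ j ∈ Finset.range m, Δ j) + b m * Δ m := by linarith
        _ ≤ b m * (∑ j ∈ Finset.range m, Δ j) + b m * Δ m := by linarith
        _ = b m * ((∑ j ∈ Finset.range m, Δ j) + Δ m) := by ring
  rcases Nat.eq_zero_or_pos n with rfl | hn
  · simp
  · have h := key n le_rfl
    have hQ := hpre n le_rfl
    have hb' : 0 ≤ b (n - 1) := hb0 (n - 1) (by omega)
    nlinarith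

/-- The greedy first-price allocation (which processes bidders in decreasing bid order,
giving each the maximum feasible number of clicks given its predecessors' allocations)
maximizes revenue `∑ bᵢcᵢ` over all feasible allocations. -/
theorem stmt8 {n : ℕ} (b B : Fin n → ℝ) (D : ℕ → ℝ)
    (hb : StrictAnti b) (hbpos : ∀ i, 0 < b i) (hBpos : ∀ i, 0 < B i)
    (hD : ∀ j k : ℕ, j < k → k < n → D k < D j) (hDnonneg : ∀ j, 0 ≤ D j)
    (c : Fin n → ℝ) (hfeas : FeasClicks b B D c)
    (hgreedy : ∀ i : Fin n, ∀ d : Fin n → ℝ,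
      FeasClicks b B D d → (∀ j : Fin n, j < i → d j = c j) → d i ≤ c i) :
    ∀ d : Fin n → ℝ, FeasClicks b B D d → ∑ i, b i * d i ≤ ∑ i, b i * c i := by
  classical
  have hD' : ∀ j k : ℕ, j ≤ k → k < n → D k ≤ D j := by
    intro j k hjk hk
    rcases eq_or_lt_of_le hjk with rfl | h
    · exact le_rfl
    · exact (hD j k h hk).le
  intro d hd
  -- truncations
  set xk : ℕ → Fin n → ℝ := fun k i => if (i : ℕ) < k then c i else 0 with hxk
  set yk : ℕ → Fin n → ℝ := fun k i => if (i : ℕ) < k then d i else 0 with hyk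
  have hxfeas : ∀ k, FeasClicks b B D (xk k) := by
    intro k
    apply feasClicks_mono hfeas
    · intro i; by_cases h : (i : ℕ) < k <;> simp [hxk, h, hfeas.1 i]
    · intro i; by_cases h : (i : ℕ) < k <;> simp [hxk, h, hfeas.1 i]
  have hyfeas : ∀ k, FeasClicks b B D (yk k) := by
    intro k
    apply feasClicks_mono hd
    · intro i; by_cases h : (i : ℕ) < k <;> simp [hyk, h, hd.1 i]
    · intro i; by_cases h : (i : ℕ) < k <;> simp [hyk, h, hd.1 i]
  -- prefix dominance
  have key : ∀ k, ∑ i, yk k i ≤ ∑ i, xk k i := by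
    intro k
    apply exchange_le hD' (hxfeas k) (hyfeas k)
    intro i hlt
    have hik : (i : ℕ) < k := by
      by_contra h
      simp [hxk, hyk, h] at hlt
    have hxki : xk k i = c i := by simp [hxk, hik]
    have hyki : yk k i = d i := by simp [hyk, hik]
    -- maximality of xk k at i
    have hmax : ∀ z : Fin n → ℝ, FeasClicks b B D z →
        (∀ j, j ≠ i → z j = xk k j) → z i ≤ xk k i := by
      intro z hz hzx
      rw [hxki]
      apply hgreedy i z hz
      intro j hj
      have hji : j ≠ i := ne_of_lt hj
      have hjk : (j : ℕ) < k := lt_trans hj hik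
      rw [hzx j hji]
      simp [hxk, hjk]
    by_cases hcap : xk k i < B i / b i
    · exact blocking_tight (hxfeas k) i hmax hcap
    · exfalso
      have h1 : d i ≤ B i / b i := hd.2.1 i
      push_neg at hcap
      rw [hxki] at hcap hlt
      rw [hyki] at hlt
      linarith
  -- convert to ℕ-indexed sums
  set b' : ℕ → ℝ := fun j => if h : j < n then b ⟨j, h⟩ else 0 with hb'
  set Δ' : ℕ → ℝ := fun j => if h : j < n then d ⟨j, h⟩ - c ⟨j, h⟩ else 0 with hΔ'
  have hfilter : ∀ k : ℕ, (Finset.range n).filter (· < k) = Finset.range (min n k) := by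
    intro k; ext j; simp only [Finset.mem_filter, Finset.mem_range]; omega
  have hsum_eq : ∀ k, (∑ i, yk k i) - (∑ i, xk k i) = ∑ j ∈ Finset.range (min n k), Δ' j := by
    intro k
    have hy : ∑ i, yk k i = ∑ j ∈ Finset.range n, (if j < k then (if h : j < n then d ⟨j, h⟩ else 0) else 0) := by
      rw [← Fin.sum_univ_eq_sum_range]
      apply Finset.sum_congr rfl
      intro i _
      simp [hyk, i.isLt]
    have hx : ∑ i, xk k i = ∑ j ∈ Finset.range n, (if j < k then (if h : j < n then c ⟨j, h⟩ else 0) else 0) := by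
      rw [← Fin.sum_univ_eq_sum_range]
      apply Finset.sum_congr rfl
      intro i _
      simp [hxk, i.isLt]
    rw [hy, hx, ← Finset.sum_sub_distrib]
    have hcong : ∀ j ∈ Finset.range n,
        (if j < k then (if h : j < n then d ⟨j, h⟩ else 0) else 0) -
          (if j < k then (if h : j < n then c ⟨j, h⟩ else 0) else 0) =
        if j < k then Δ' j else 0 := by
      intro j hj
      rw [Finset.mem_range] at hj
      by_cases h : j < k <;> simp [hΔ', h, hj]
    rw [Finset.sum_congr rfl hcong, ← Finset.sum_filter, hfilter k]
  have hpre : ∀ k, k ≤ n → ∑ j ∈ Finset.range k, Δ' j ≤ 0 := by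
    intro k hk
    have := key k
    have h := hsum_eq k
    rw [min_eq_right hk] at h
    linarith
  have habel := abel_nonpos (n := n) (b := b') (Δ := Δ')
    (by
      intro k hk
      simp only [hb', dif_pos hk, dif_pos (by omega : k < n)]
      exact (hb (show (⟨k, by omega⟩ : Fin n) < ⟨k + 1, hk⟩ by simp)).le)
    (by intro k hk; simp only [hb', dif_pos hk]; exact (hbpos _).le)
    hpre
  have hfinal : (∑ i, b i * d i) - (∑ i, b i * c i) = ∑ j ∈ Finset.range n, b' j * Δ' j := by
    rw [← Finset.sum_sub_distrib, ← Fin.sum_univ_eq_sum_range]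
    apply Finset.sum_congr rfl
    intro i _
    simp [hb', hΔ', i.isLt]
    ring
  linarith
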